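/- Let m, n, r ≥ 1, μ > 0, β_T > 0, ρ ≥ 0, and set β₁ = β_T·√(3μr/m), β₂ = β_T·√(3μr/n). Let X, U ∈ ℝ^{m×r} and Y, V ∈ ℝ^{n×r}, and suppose: ‖U^{(i)}‖² ≤ (3/2)·(rμ/m)·β_T² for every row i; ‖V^{(j)}‖² ≤ (3/2)·(rμ/n)·β_T² for every row j; if ‖X‖_F > √(2/3)·β_T then ‖U‖_F ≤ ‖X‖_F; and if ‖Y‖_F > √(2/3)·β_T then ‖V‖_F ≤ ‖Y‖_F. Then ⟨∇_X G(X,Y), X − U⟩ + ⟨∇_Y G(X,Y), Y − V⟩ ≥ 0, where ⟨A,B⟩ = trace(AᵀB). -/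

import Mathlib

open Matrix
open scoped Classical

noncomputable section

/-- Frobenius norm of a real matrix. -/
def frob {m n : ℕ} (A : Matrix (Fin m) (Fin n) ℝ) : ℝ :=
  Real.sqrt (∑ i, ∑ j, A i j ^ 2)

/-- Euclidean norm of the `i`-th row of a matrix. -/
def rowNorm {m n : ℕ} (A : Matrix (Fin m) (Fin n) ℝ) (i : Fin m) : ℝ :=
  Real.sqrt (∑ j, A i j ^ 2)

/-- Frobenius inner product `⟨A,B⟩ = trace(AᵀB)`. -/
def finner {m n : ℕ} (A B : Matrix (Fin m) (Fin n) ℝ) : ℝ :=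
  ∑ i, ∑ j, A i j * B i j

/-- Projection onto the set of entries indexed by `Ω` (other entries are set to `0`). -/
def projOmega {m n : ℕ} (Ω : Finset (Fin m × Fin n)) (A : Matrix (Fin m) (Fin n) ℝ) :
    Matrix (Fin m) (Fin n) ℝ :=
  Matrix.of fun i j => if (i, j) ∈ Ω then A i j else 0

/-- `G₀(z) = (max{0, z-1})²`. -/
def G0 (z : ℝ) : ℝ := max 0 (z - 1) ^ 2

/-- `G₀′(z) = 2·max{0, z-1}`. -/
def G0' (z : ℝ) : ℝ := 2 * max 0 (z - 1)

/-- The matrix whose `i`-th row is the `i`-th row of `A` and whose other rows vanish. -/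
def rowMat {m n : ℕ} (A : Matrix (Fin m) (Fin n) ℝ) (i : Fin m) :
    Matrix (Fin m) (Fin n) ℝ :=
  Matrix.of fun i' j => if i' = i then A i j else 0

/-- The regularizer `G(X,Y)`. -/
def Greg {m n r : ℕ} (ρ β1 β2 βT : ℝ) (X : Matrix (Fin m) (Fin r) ℝ)
    (Y : Matrix (Fin n) (Fin r) ℝ) : ℝ :=
  ρ * ∑ i, G0 (3 * rowNorm X i ^ 2 / (2 * β1 ^ 2)) +
    ρ * ∑ j, G0 (3 * rowNorm Y j ^ 2 / (2 * β2 ^ 2)) +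
    ρ * G0 (3 * frob X ^ 2 / (2 * βT ^ 2)) +
    ρ * G0 (3 * frob Y ^ 2 / (2 * βT ^ 2))

/-- The regularized objective `F̃(X,Y)`. -/
def Ftilde {m n r : ℕ} (Ω : Finset (Fin m × Fin n)) (M : Matrix (Fin m) (Fin n) ℝ)
    (ρ β1 β2 βT : ℝ) (X : Matrix (Fin m) (Fin r) ℝ) (Y : Matrix (Fin n) (Fin r) ℝ) : ℝ :=
  (1 / 2) * frob (projOmega Ω (M - X * Yᵀ)) ^ 2 + Greg ρ β1 β2 βT X Y

/-- Gradient of the regularizer with respect to one of the factors. -/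
def gradG1 {m r : ℕ} (ρ β βT : ℝ) (X : Matrix (Fin m) (Fin r) ℝ) :
    Matrix (Fin m) (Fin r) ℝ :=
  (∑ i, (ρ * G0' (3 * rowNorm X i ^ 2 / (2 * β ^ 2)) * (3 / β ^ 2)) • rowMat X i) +
    (ρ * G0' (3 * frob X ^ 2 / (2 * βT ^ 2)) * (3 / βT ^ 2)) • X

/-- `∇_X F̃(X,Y)`. -/
def gradX {m n r : ℕ} (Ω : Finset (Fin m × Fin n)) (M : Matrix (Fin m) (Fin n) ℝ)
    (ρ β1 βT : ℝ) (X : Matrix (Fin m) (Fin r) ℝ) (Y : Matrix (Fin n) (Fin r) ℝ) :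
    Matrix (Fin m) (Fin r) ℝ :=
  projOmega Ω (X * Yᵀ - M) * Y + gradG1 ρ β1 βT X

/-- `∇_Y F̃(X,Y)`. -/
def gradY {m n r : ℕ} (Ω : Finset (Fin m × Fin n)) (M : Matrix (Fin m) (Fin n) ℝ)
    (ρ β2 βT : ℝ) (X : Matrix (Fin m) (Fin r) ℝ) (Y : Matrix (Fin n) (Fin r) ℝ) :
    Matrix (Fin n) (Fin r) ℝ :=
  (projOmega Ω (X * Yᵀ - M))ᵀ * X + gradG1 ρ β2 βT Y

/-- Membership in `K₁`. -/
def K1mem {m n r : ℕ} (β1 β2 : ℝ) (X : Matrix (Fin m) (Fin r) ℝ)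
    (Y : Matrix (Fin n) (Fin r) ℝ) : Prop :=
  (∀ i, rowNorm X i ≤ β1) ∧ ∀ j, rowNorm Y j ≤ β2

/-- Membership in `K₂`. -/
def K2mem {m n r : ℕ} (βT : ℝ) (X : Matrix (Fin m) (Fin r) ℝ)
    (Y : Matrix (Fin n) (Fin r) ℝ) : Prop :=
  frob X ≤ βT ∧ frob Y ≤ βT

/-- Membership in `K(t) = {(X,Y) : ‖M - XYᵀ‖_F ≤ t}`. -/
def Kmem {m n r : ℕ} (M : Matrix (Fin m) (Fin n) ℝ) (t : ℝ)
    (X : Matrix (Fin m) (Fin r) ℝ) (Y : Matrix (Fin n) (Fin r) ℝ) : Prop :=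
  frob (M - X * Yᵀ) ≤ t

/-- Cauchy–Schwarz for finite sums in the square-root form. -/
lemma cs_sqrt {ι : Type*} [Fintype ι] (f g : ι → ℝ) :
    ∑ i, f i * g i ≤ Real.sqrt (∑ i, f i ^ 2) * Real.sqrt (∑ i, g i ^ 2) := by
  have h := Finset.sum_mul_sq_le_sq_mul_sq Finset.univ f g
  calc ∑ i, f i * g i ≤ |∑ i, f i * g i| := le_abs_self _
    _ = Real.sqrt ((∑ i, f i * g i) ^ 2) := (Real.sqrt_sq_eq_abs _).symm
    _ ≤ Real.sqrt ((∑ i, f i ^ 2) * ∑ i, g i ^ 2) := Real.sqrt_le_sqrt h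
    _ = _ := Real.sqrt_mul (Finset.sum_nonneg fun i _ => sq_nonneg _) _

lemma rowNorm_nonneg {m n : ℕ} (A : Matrix (Fin m) (Fin n) ℝ) (i : Fin m) :
    0 ≤ rowNorm A i := Real.sqrt_nonneg _

lemma frob_nonneg {m n : ℕ} (A : Matrix (Fin m) (Fin n) ℝ) : 0 ≤ frob A :=
  Real.sqrt_nonneg _

lemma rowNorm_sq {m n : ℕ} (A : Matrix (Fin m) (Fin n) ℝ) (i : Fin m) :
    rowNorm A i ^ 2 = ∑ j, A i j ^ 2 :=
  Real.sq_sqrt (Finset.sum_nonneg fun j _ => sq_nonneg _)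

lemma frob_sq {m n : ℕ} (A : Matrix (Fin m) (Fin n) ℝ) :
    frob A ^ 2 = ∑ i, ∑ j, A i j ^ 2 :=
  Real.sq_sqrt (Finset.sum_nonneg fun i _ => Finset.sum_nonneg fun j _ => sq_nonneg _)

/-- Inner product of a single-row matrix against `B`. -/
lemma finner_rowMat {m n : ℕ} (A B : Matrix (Fin m) (Fin n) ℝ) (i : Fin m) :
    finner (rowMat A i) B = ∑ j, A i j * B i j := by
  simp [finner, rowMat, Finset.sum_ite_eq', Matrix.of_apply]

lemma finner_rowMat_nonneg {m n : ℕ} (X U : Matrix (Fin m) (Fin n) ℝ) (i : Fin m)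
    (h : rowNorm U i ≤ rowNorm X i) : 0 ≤ finner (rowMat X i) (X - U) := by
  rw [finner_rowMat]
  have : ∑ j, X i j * (X - U) i j = rowNorm X i ^ 2 - ∑ j, X i j * U i j := by
    simp only [Matrix.sub_apply, mul_sub, Finset.sum_sub_distrib]
    rw [rowNorm_sq]
    congr 1
    exact Finset.sum_congr rfl fun j _ => (sq (X i j)).symm
  rw [this, sub_nonneg]
  calc ∑ j, X i j * U i j ≤ rowNorm X i * rowNorm U i := by
        simpa [rowNorm] using cs_sqrt (fun j => X i j) (fun j => U i j)
    _ ≤ rowNorm X i * rowNorm X i :=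
        mul_le_mul_of_nonneg_left h (rowNorm_nonneg X i)
    _ = rowNorm X i ^ 2 := by ring

lemma finner_self_sub_nonneg {m n : ℕ} (X U : Matrix (Fin m) (Fin n) ℝ)
    (h : frob U ≤ frob X) : 0 ≤ finner X (X - U) := by
  have hXU : finner X U ≤ frob X * frob U := by
    have := cs_sqrt (fun p : Fin m × Fin n => X p.1 p.2) (fun p => U p.1 p.2)
    simpa [finner, frob, Fintype.sum_prod_type] using this
  have : finner X (X - U) = frob X ^ 2 - finner X U := by
    simp only [finner, Matrix.sub_apply, mul_sub, Finset.sum_sub_distrib]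
    rw [frob_sq]
    congr 1
    exact Finset.sum_congr rfl fun i _ => Finset.sum_congr rfl fun j _ => (sq (X i j)).symm
  rw [this, sub_nonneg]
  calc finner X U ≤ frob X * frob U := hXU
    _ ≤ frob X * frob X := mul_le_mul_of_nonneg_left h (frob_nonneg X)
    _ = frob X ^ 2 := by ring

lemma G0'_nonneg (z : ℝ) : 0 ≤ G0' z := by
  unfold G0'; positivity

lemma G0'_eq_zero {z : ℝ} (h : z ≤ 1) : G0' z = 0 := by
  unfold G0'
  rw [max_eq_left (by linarith)]
  ring

lemma finner_add_left {m n : ℕ} (A B C : Matrix (Fin m) (Fin n) ℝ) :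
    finner (A + B) C = finner A C + finner B C := by
  simp [finner, Matrix.add_apply, add_mul, Finset.sum_add_distrib]

lemma finner_smul_left {m n : ℕ} (c : ℝ) (A C : Matrix (Fin m) (Fin n) ℝ) :
    finner (c • A) C = c * finner A C := by
  simp [finner, Matrix.smul_apply, smul_eq_mul, mul_assoc, Finset.mul_sum]

lemma finner_sum_left {m n : ℕ} {ι : Type*} (s : Finset ι)
    (A : ι → Matrix (Fin m) (Fin n) ℝ) (C : Matrix (Fin m) (Fin n) ℝ) :
    finner (∑ i ∈ s, A i) C = ∑ i ∈ s, finner (A i) C := by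
  classical
  induction s using Finset.induction with
  | empty => simp [finner]
  | insert a s h ih => rw [Finset.sum_insert h, finner_add_left, ih, Finset.sum_insert h]

/-- Core inequality for one factor. -/
lemma key {m r : ℕ} (ρ β βT : ℝ) (hρ : 0 ≤ ρ)
    (X U : Matrix (Fin m) (Fin r) ℝ)
    (hrow : ∀ i, 2 * β ^ 2 / 3 < rowNorm X i ^ 2 → rowNorm U i ≤ rowNorm X i)
    (hfro : 2 * βT ^ 2 / 3 < frob X ^ 2 → frob U ≤ frob X) :
    0 ≤ finner (gradG1 ρ β βT X) (X - U) := by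
  unfold gradG1
  rw [finner_add_left, finner_sum_left, finner_smul_left]
  have hrowterm : ∀ i : Fin m,
      0 ≤ finner ((ρ * G0' (3 * rowNorm X i ^ 2 / (2 * β ^ 2)) * (3 / β ^ 2)) • rowMat X i)
        (X - U) := by
    intro i
    rw [finner_smul_left]
    by_cases hz : 3 * rowNorm X i ^ 2 / (2 * β ^ 2) ≤ 1
    · rw [G0'_eq_zero hz]; simp
    · push_neg at hz
      have hβ2 : 0 < β ^ 2 := by
        rcases eq_or_ne (β ^ 2) 0 with hb | hb
        · exfalso; rw [hb] at hz; simp at hz; linarith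
        · exact lt_of_le_of_ne (sq_nonneg β) (Ne.symm hb)
      have h1 : 2 * β ^ 2 / 3 < rowNorm X i ^ 2 := by
        rw [lt_div_iff₀ (by positivity)] at hz
        linarith
      exact mul_nonneg
        (mul_nonneg (mul_nonneg hρ (G0'_nonneg _)) (by positivity))
        (finner_rowMat_nonneg X U i (hrow i h1))
  have hfroterm :
      0 ≤ ρ * G0' (3 * frob X ^ 2 / (2 * βT ^ 2)) * (3 / βT ^ 2) * finner X (X - U) := by
    by_cases hz : 3 * frob X ^ 2 / (2 * βT ^ 2) ≤ 1
    · rw [G0'_eq_zero hz]; simp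
    · push_neg at hz
      have hβ2 : 0 < βT ^ 2 := by
        rcases eq_or_ne (βT ^ 2) 0 with hb | hb
        · exfalso; rw [hb] at hz; simp at hz; linarith
        · exact lt_of_le_of_ne (sq_nonneg βT) (Ne.symm hb)
      have h1 : 2 * βT ^ 2 / 3 < frob X ^ 2 := by
        rw [lt_div_iff₀ (by positivity)] at hz
        linarith
      exact mul_nonneg
        (mul_nonneg (mul_nonneg hρ (G0'_nonneg _)) (by positivity))
        (finner_self_sub_nonneg X U (hfro h1))
  have := Finset.sum_nonneg fun i (_ : i ∈ Finset.univ) => hrowterm i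
  linarith

/-- **Claim: `φ_G ≥ 0`.** -/
theorem stmt12 (m n r : ℕ) (hm : 1 ≤ m) (hn : 1 ≤ n) (hr : 1 ≤ r)
    (μ βT ρ : ℝ) (hμ : 0 < μ) (hβT : 0 < βT) (hρ : 0 ≤ ρ)
    (X U : Matrix (Fin m) (Fin r) ℝ) (Y V : Matrix (Fin n) (Fin r) ℝ)
    (hU : ∀ i, rowNorm U i ^ 2 ≤ 3 / 2 * (r * μ / m) * βT ^ 2)
    (hV : ∀ j, rowNorm V j ^ 2 ≤ 3 / 2 * (r * μ / n) * βT ^ 2)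
    (hXU : frob X > Real.sqrt (2 / 3) * βT → frob U ≤ frob X)
    (hYV : frob Y > Real.sqrt (2 / 3) * βT → frob V ≤ frob Y) :
    0 ≤ finner (gradG1 ρ (βT * Real.sqrt (3 * μ * r / m)) βT X) (X - U) +
        finner (gradG1 ρ (βT * Real.sqrt (3 * μ * r / n)) βT Y) (Y - V) := by
  have hm' : (0:ℝ) < m := by exact_mod_cast Nat.lt_of_lt_of_le Nat.zero_lt_one hm
  have hn' : (0:ℝ) < n := by exact_mod_cast Nat.lt_of_lt_of_le Nat.zero_lt_one hn
  have hr' : (0:ℝ) < r := by exact_mod_cast Nat.lt_of_lt_of_le Nat.zero_lt_one hr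
  have hfrX : 2 * βT ^ 2 / 3 < frob X ^ 2 → frob U ≤ frob X := by
    intro h
    apply hXU
    have hsq : (Real.sqrt (2/3) * βT) ^ 2 = 2/3 * βT ^ 2 := by
      rw [mul_pow, Real.sq_sqrt (by norm_num)]
    have h2 : (Real.sqrt (2/3) * βT) ^ 2 < frob X ^ 2 := by rw [hsq]; linarith
    exact lt_of_pow_lt_pow_left₀ 2 (frob_nonneg X) h2
  have hfrY : 2 * βT ^ 2 / 3 < frob Y ^ 2 → frob V ≤ frob Y := by
    intro h
    apply hYV
    have hsq : (Real.sqrt (2/3) * βT) ^ 2 = 2/3 * βT ^ 2 := by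
      rw [mul_pow, Real.sq_sqrt (by norm_num)]
    have h2 : (Real.sqrt (2/3) * βT) ^ 2 < frob Y ^ 2 := by rw [hsq]; linarith
    exact lt_of_pow_lt_pow_left₀ 2 (frob_nonneg Y) h2
  apply add_nonneg
  · apply key _ _ _ hρ _ _ _ hfrX
    intro i hi
    have hβsq : (βT * Real.sqrt (3 * μ * r / m)) ^ 2 = βT ^ 2 * (3 * μ * r / m) := by
      rw [mul_pow, Real.sq_sqrt (by positivity)]
    rw [hβsq] at hi
    have hUi := hU i
    have hpos : 0 ≤ (r : ℝ) * μ / m * βT ^ 2 := by positivity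
    have h2 : rowNorm U i ^ 2 ≤ rowNorm X i ^ 2 := by
      have hx : 3 / 2 * ((r : ℝ) * μ / m) * βT ^ 2 ≤ 2 * (βT ^ 2 * (3 * μ * r / m)) / 3 := by
        have he : 2 * (βT ^ 2 * (3 * μ * (r : ℝ) / m)) / 3 = 2 * ((r : ℝ) * μ / m * βT ^ 2) := by
          ring
        rw [he]; linarith
      linarith
    have := Real.sqrt_le_sqrt h2
    rwa [Real.sqrt_sq (rowNorm_nonneg U i), Real.sqrt_sq (rowNorm_nonneg X i)] at this
  · apply key _ _ _ hρ _ _ _ hfrY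
    intro j hj
    have hβsq : (βT * Real.sqrt (3 * μ * r / n)) ^ 2 = βT ^ 2 * (3 * μ * r / n) := by
      rw [mul_pow, Real.sq_sqrt (by positivity)]
    rw [hβsq] at hj
    have hVj := hV j
    have hpos : 0 ≤ (r : ℝ) * μ / n * βT ^ 2 := by positivity
    have h2 : rowNorm V j ^ 2 ≤ rowNorm Y j ^ 2 := by
      have hy : 3 / 2 * ((r : ℝ) * μ / n) * βT ^ 2 ≤ 2 * (βT ^ 2 * (3 * μ * r / n)) / 3 := by
        have he : 2 * (βT ^ 2 * (3 * μ * (r : ℝ) / n)) / 3 = 2 * ((r : ℝ) * μ / n * βT ^ 2) := by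
          ring
        rw [he]; linarith
      linarith
    have := Real.sqrt_le_sqrt h2
    rwa [Real.sqrt_sq (rowNorm_nonneg V j), Real.sqrt_sq (rowNorm_nonneg Y j)] at this

end
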